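/- Let k, m, n be positive natural numbers and set A = (3m^2+n^2)k^2 + (m^2+n^2)^2, B = -k^4 + 2m^2 k^2 + (m^2+n^2)^2, C = 2√2 k m (m^2+n^2). Then the characteristic polynomial of the 8×8 matrix built from 2×2 blocks as in the text (diagonal entries A (four times) and B (four times), off-diagonal coupling entries ±C) equals [A(λ - B) + λ(B - λ) + C^2]^4, i.e. [−λ^2 + (A+B)λ − AB + C^2]^4, so its eigenvalues are λ± = ((A+B) ± sqrt((A-B)^2 + 4C^2))/2, each with multiplicity 4. -/
import Mathlib


open Polynomial

lemma charmatrix_blockDiag {R : Type*} [CommRing R] {o m : Type*} [DecidableEq o] [DecidableEq m]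
    [Fintype o] [Fintype m] (D : o → Matrix m m R) :
    Matrix.charmatrix (Matrix.blockDiagonal D)
      = Matrix.blockDiagonal (fun i => Matrix.charmatrix (D i)) := by
  ext ⟨i, b⟩ ⟨j, c⟩
  simp [Matrix.charmatrix, Matrix.blockDiagonal, Matrix.one_apply, Prod.ext_iff, Matrix.diagonal]
  aesop

lemma charpoly_blockDiag {R : Type*} [CommRing R] {o m : Type*} [DecidableEq o] [DecidableEq m]
    [Fintype o] [Fintype m] (D : o → Matrix m m R) :
    (Matrix.blockDiagonal D).charpoly = ∏ i, (D i).charpoly := by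
  rw [Matrix.charpoly, charmatrix_blockDiag, Matrix.det_blockDiagonal]
  rfl

lemma charpoly2 (a b c d : ℝ) :
    (Matrix.of ![![a, b], ![c, d]]).charpoly
      = X^2 - Polynomial.C (a+d) * X + Polynomial.C (a*d - b*c) := by
  rw [Matrix.charpoly, Matrix.det_fin_two]
  simp [Matrix.charmatrix_apply]
  ring

def myEquiv : Fin 2 × Fin 4 ≃ Fin 8 where
  toFun p := ![![0,1,2,3],![6,7,4,5]] p.1 p.2
  invFun i := ![(0,0),(0,1),(0,2),(0,3),(1,2),(1,3),(1,0),(1,1)] i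
  left_inv := by decide
  right_inv := by decide

theorem stmt_6 (k m n : ℕ) (hk : 0 < k) (hm : 0 < m) (hn : 0 < n)
    (A B C' : ℝ)
    (hA : A = (3*(m:ℝ)^2+(n:ℝ)^2)*(k:ℝ)^2 + ((m:ℝ)^2+(n:ℝ)^2)^2)
    (hB : B = -(k:ℝ)^4 + 2*(m:ℝ)^2*(k:ℝ)^2 + ((m:ℝ)^2+(n:ℝ)^2)^2)
    (hC : C' = 2*Real.sqrt 2*(k:ℝ)*(m:ℝ)*((m:ℝ)^2+(n:ℝ)^2))
    (M : Matrix (Fin 8) (Fin 8) ℝ)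
    (hM : M = Matrix.of
      ![![A, 0, 0, 0, 0, 0, -C', 0],
        ![0, A, 0, 0, 0, 0, 0, -C'],
        ![0, 0, A, 0, C', 0, 0, 0],
        ![0, 0, 0, A, 0, C', 0, 0],
        ![0, 0, C', 0, B, 0, 0, 0],
        ![0, 0, 0, C', 0, B, 0, 0],
        ![-C', 0, 0, 0, 0, 0, B, 0],
        ![0, -C', 0, 0, 0, 0, 0, B]])
    (lamP lamM : ℝ)
    (hP : lamP = ((A + B) + Real.sqrt ((A - B)^2 + 4*C'^2)) / 2)
    (hMm : lamM = ((A + B) - Real.sqrt ((A - B)^2 + 4*C'^2)) / 2) :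
    M.charpoly = (X^2 - Polynomial.C (A + B) * X + Polynomial.C (A*B - C'^2))^4 ∧
    M.charpoly = ((X - Polynomial.C lamP) * (X - Polynomial.C lamM))^4 := by
  have hM' : M = Matrix.reindex myEquiv myEquiv (Matrix.blockDiagonal
      ![Matrix.of ![![A,-C'],![-C',B]], Matrix.of ![![A,-C'],![-C',B]],
        Matrix.of ![![A,C'],![C',B]], Matrix.of ![![A,C'],![C',B]]]) := by
    subst hM
    ext i j
    fin_cases i <;> fin_cases j <;> rfl
  have key : M.charpoly
      = (X^2 - Polynomial.C (A + B) * X + Polynomial.C (A*B - C'^2))^4 := by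
    rw [hM', Matrix.charpoly_reindex, charpoly_blockDiag, Fin.prod_univ_four]
    simp only [Matrix.cons_val_zero, Matrix.cons_val_one, Matrix.head_cons,
      Matrix.cons_val_two, Matrix.tail_cons, Matrix.cons_val_three, charpoly2]
    ring
  refine ⟨key, key.trans ?_⟩
  have hs : Real.sqrt ((A - B)^2 + 4*C'^2) ^ 2 = (A - B)^2 + 4*C'^2 :=
    Real.sq_sqrt (by positivity)
  have h1 : lamP + lamM = A + B := by rw [hP, hMm]; ring
  have h2 : lamP * lamM = A*B - C'^2 := by
    rw [hP, hMm]
    have : ((A + B) + Real.sqrt ((A - B)^2 + 4*C'^2)) / 2 *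
        (((A + B) - Real.sqrt ((A - B)^2 + 4*C'^2)) / 2)
        = ((A+B)^2 - Real.sqrt ((A - B)^2 + 4*C'^2)^2) / 4 := by ring
    rw [this, hs]; ring
  rw [← h1, ← h2]
  simp only [map_add, map_mul, map_sub]
  ring
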